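/- Let G ∈ G* be 2-connected and let C be a longest odd cycle of G with |C| ≥ 5. Then the touching set T(v) is the same for all vertices v outside C. -/

import Mathlib

open SimpleGraph

/-- Adjacency in the line graph `L(G)`: two distinct edges sharing an endpoint. -/
def lineAdj {V : Type*} (G : SimpleGraph V) (e f : G.edgeSet) : Prop :=
  e ≠ f ∧ ∃ x : V, x ∈ (e : Sym2 V) ∧ x ∈ (f : Sym2 V)

/-- `D` is an orientation of the (loopless) adjacency relation `Adj`:
every arc of `D` is an edge, and every edge gets at least one of its two arcs. -/
def IsOrientation {α : Type*} (Adj : α → α → Prop) (D : α → α → Prop) : Prop :=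
  (∀ a b, D a b → Adj a b) ∧ (∀ a b, Adj a b → D a b ∨ D b a)

/-- A digraph (relation) is kernel-perfect if every induced subdigraph has a kernel:
an independent set `S` such that every vertex outside `S` has an out-neighbor in `S`. -/
def KernelPerfect {α : Type*} (D : α → α → Prop) : Prop :=
  ∀ Z : Set α, ∃ S ⊆ Z, (∀ a ∈ S, ∀ b ∈ S, ¬ D a b) ∧
    ∀ z ∈ Z, z ∉ S → ∃ s ∈ S, D z s

/-- Out-degree of a vertex in a digraph given as a relation. -/
noncomputable def outDeg {α : Type*} (D : α → α → Prop) (a : α) : ℕ := {b | D a b}.ncard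

/-- Degree of a vertex. -/
noncomputable def deg {V : Type*} (G : SimpleGraph V) (v : V) : ℕ := (G.neighborSet v).ncard

/-- Maximum degree. -/
noncomputable def maxDeg {V : Type*} (G : SimpleGraph V) : ℕ := sSup (Set.range (deg G))

/-- `G` is `f`-edge-orientable: `L(G)` admits a kernel-perfect orientation with
`1 + d⁺(e) ≤ f e` for every edge `e`. -/
def EdgeOrientable {V : Type*} (G : SimpleGraph V) (f : G.edgeSet → ℕ) : Prop :=
  ∃ D : G.edgeSet → G.edgeSet → Prop,
    IsOrientation (lineAdj G) D ∧ KernelPerfect D ∧ ∀ e, outDeg D e + 1 ≤ f e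

open Classical in
/-- The function `f_{k,v}`: `deg v` on edges incident to `v`, and `k` elsewhere. -/
noncomputable def fkv {V : Type*} (G : SimpleGraph V) (k : ℕ) (v : V) (e : G.edgeSet) : ℕ :=
  if v ∈ (e : Sym2 V) then deg G v else k

/-- `G` is strongly `k`-edge-orientable. -/
def StronglyEdgeOrientable {V : Type*} (G : SimpleGraph V) (k : ℕ) : Prop :=
  ∀ v : V, EdgeOrientable G (fkv G k v)

/-- `G` is `f`-edge-choosable. -/
def FEdgeChoosable {V : Type*} (G : SimpleGraph V) (f : G.edgeSet → ℕ) : Prop :=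
  ∀ ℓ : G.edgeSet → Finset ℕ, (∀ e, f e ≤ (ℓ e).card) →
    ∃ φ : G.edgeSet → ℕ, (∀ e, φ e ∈ ℓ e) ∧
      ∀ e₁ e₂, lineAdj G e₁ e₂ → φ e₁ ≠ φ e₂

/-- `G ∈ G*`: any two distinct odd cycles share at most one edge. -/
def InGStar {V : Type*} (G : SimpleGraph V) : Prop :=
  ∀ (u w : V) (c₁ : G.Walk u u) (c₂ : G.Walk w w),
    c₁.IsCycle → c₂.IsCycle → Odd c₁.length → Odd c₂.length →
    {e | e ∈ c₁.edges} ≠ {e | e ∈ c₂.edges} →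
    ({e | e ∈ c₁.edges} ∩ {e | e ∈ c₂.edges}).ncard ≤ 1

/-- `G` is 2-connected: connected, and still connected after deleting any one vertex. -/
def TwoConn {V : Type*} (G : SimpleGraph V) : Prop :=
  G.Connected ∧ ∀ v : V, (G.induce {w | w ≠ v}).Connected

/-- A block of `G`: a maximal 2-connected subgraph. -/
def IsBlock {V : Type*} (G : SimpleGraph V) (B : G.Subgraph) : Prop :=
  TwoConn B.coe ∧ ∀ B' : G.Subgraph, TwoConn B'.coe → B ≤ B' → B = B'

/-- Vertex type of the theta graph with path lengths `l`: two hubs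
(`Sum.inl false`, `Sum.inl true`) plus the internal vertices of each path. -/
def ThetaVert (l : List ℕ) : Type := Bool ⊕ (Σ i : Fin l.length, Fin (l.get i - 1))

/-- The theta graph `Θ_{l₁,…,l_k}`: two hubs joined by internally disjoint paths,
the `i`-th of length `l i`. -/
def thetaGraph (l : List ℕ) : SimpleGraph (ThetaVert l) :=
  SimpleGraph.fromRel (fun a b =>
    match a, b with
    | Sum.inl false, Sum.inl true => 1 ∈ l
    | Sum.inl false, Sum.inr ⟨_, j⟩ => j.val = 0
    | Sum.inl true, Sum.inr ⟨i, j⟩ => j.val = l.get i - 2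
    | Sum.inr ⟨i, j⟩, Sum.inr ⟨i', j'⟩ => i.val = i'.val ∧ j'.val = j.val + 1
    | _, _ => False)

/-- `v` (outside `c`) touches `w ∈ c`: some `v,w`-path meets `c` only at `w`. -/
def Touches {V : Type*} (G : SimpleGraph V) {u : V} (c : G.Walk u u) (v w : V) : Prop :=
  w ∈ c.support ∧ ∃ p : G.Walk v w, p.IsPath ∧ ∀ x ∈ p.support, x ∈ c.support → x = w


namespace Stmt9Aux
open SimpleGraph.Walk

variable {V : Type*} {G : SimpleGraph V}

lemma length_pos_of_ne {x y : V} (p : G.Walk x y) (h : x ≠ y) : 0 < p.length := by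
  cases p with
  | nil => exact absurd rfl h
  | cons h q => simp

lemma eq_of_length_zero {x y : V} (p : G.Walk x y) (h : p.length = 0) : x = y := by
  cases p with
  | nil => rfl
  | cons _ _ => simp at h

lemma edge_mem_of_length_one {x y : V} (p : G.Walk x y) (h : p.length = 1) :
    s(x, y) ∈ p.edges := by
  cases p with
  | nil => simp at h
  | cons hadj q =>
    have h0 : q.length = 0 := by simpa using h
    have := eq_of_length_zero q h0
    subst this
    simp

lemma loop_path_length_zero {x : V} {q : G.Walk x x} (h : q.IsPath) : q.length = 0 := by
  cases q with
  | nil => rfl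
  | cons hadj r =>
    exfalso
    rw [cons_isPath_iff] at h
    exact h.2 (end_mem_support r)

lemma length_eq_one_of_edge_end {x y : V} {p : G.Walk x y} (hp : p.IsPath)
    (he : s(x, y) ∈ p.edges) : p.length = 1 := by
  cases p with
  | nil => simp at he
  | cons hadj q =>
    rename_i z
    rw [edges_cons, List.mem_cons] at he
    rw [cons_isPath_iff] at hp
    rcases he with he | he
    · rw [Sym2.eq_iff] at he
      rcases he with ⟨-, h2⟩ | ⟨h1, h2⟩
      · subst h2
        simp [loop_path_length_zero hp.1]
      · exact absurd (h1 ▸ start_mem_support q) hp.2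
    · exact absurd (fst_mem_support_of_mem_edges q he) hp.2

lemma cons_of_edge_start {x y z : V} {p : G.Walk x z} (hp : p.IsPath)
    (he : s(x, y) ∈ p.edges) : ∃ (h : G.Adj x y) (q : G.Walk y z), p = Walk.cons h q := by
  cases p with
  | nil => simp at he
  | cons hadj q =>
    rename_i w
    rw [edges_cons, List.mem_cons] at he
    rw [cons_isPath_iff] at hp
    rcases he with he | he
    · rw [Sym2.eq_iff] at he
      rcases he with ⟨-, h2⟩ | ⟨h1, h2⟩
      · subst h2; exact ⟨hadj, q, rfl⟩
      · exact absurd (h1 ▸ hadj) (G.irrefl)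
    · exact absurd (fst_mem_support_of_mem_edges q he) hp.2

lemma cycle_exists_cons {a : V} {d : G.Walk a a} (hd : d.IsCycle) :
    ∃ (x : V) (h : G.Adj a x) (r : G.Walk x a), d = Walk.cons h r := by
  cases d with
  | nil => exact absurd hd (Walk.IsCycle.not_of_nil)
  | cons h r => exact ⟨_, h, r, rfl⟩

lemma end_not_mem_takeUntil [DecidableEq V] {x v w : V} {p : G.Walk v w} (hp : p.IsPath)
    (hx : x ∈ p.support) (hxw : x ≠ w) : w ∉ (p.takeUntil x hx).support := by
  intro hw
  have hnd : p.support.Nodup := hp.support_nodup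
  have hsup : p.support = (p.takeUntil x hx).support ++ (p.dropUntil x hx).support.tail := by
    conv_lhs => rw [← p.take_spec hx]
    exact support_append _ _
  rw [hsup] at hnd
  have hwd : w ∈ (p.dropUntil x hx).support.tail := by
    have hw' : w ∈ (p.dropUntil x hx).support := end_mem_support _
    rw [support_eq_cons (p.dropUntil x hx)] at hw'
    rcases List.mem_cons.mp hw' with h | h
    · exact absurd h.symm hxw
    · exact h
  exact (List.disjoint_of_nodup_append hnd) hw hwd

lemma start_not_mem_dropUntil [DecidableEq V] {x v w : V} {p : G.Walk v w} (hp : p.IsPath)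
    (hx : x ∈ p.support) (hxv : x ≠ v) : v ∉ (p.dropUntil x hx).support := by
  intro hv
  have hnd : p.support.Nodup := hp.support_nodup
  have hsup : p.support = (p.takeUntil x hx).support ++ (p.dropUntil x hx).support.tail := by
    conv_lhs => rw [← p.take_spec hx]
    exact support_append _ _
  rw [hsup] at hnd
  have hvd : v ∈ (p.dropUntil x hx).support.tail := by
    rw [support_eq_cons (p.dropUntil x hx)] at hv
    rcases List.mem_cons.mp hv with h | h
    · exact absurd h.symm hxv
    · exact h
  exact (List.disjoint_of_nodup_append hnd) (start_mem_support _) hvd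

lemma isPath_append_of_meet {x y z : V} {p : G.Walk x y} {q : G.Walk y z}
    (hp : p.IsPath) (hq : q.IsPath)
    (hmeet : ∀ t, t ∈ p.support → t ∈ q.support → t = y) :
    (p.append q).IsPath := by
  apply Walk.IsPath.mk'
  rw [support_append]
  refine List.Nodup.append hp.support_nodup
    (hq.support_nodup.sublist (List.tail_sublist _)) ?_
  intro t htp htq
  have ht := hmeet t htp (List.mem_of_mem_tail htq)
  subst ht
  have hnd := hq.support_nodup
  rw [support_eq_cons q] at hnd
  exact (List.nodup_cons.mp hnd).1 htq

lemma twodist {α : Type*} {l : List α} (hn : l.Nodup) (hl : 2 ≤ l.length) :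
    ∃ x ∈ l, ∃ y ∈ l, x ≠ y := by
  match l, hl with
  | x :: y :: t, _ =>
    refine ⟨x, by simp, y, by simp, ?_⟩
    rw [List.nodup_cons] at hn
    exact fun h => hn.1 (h ▸ List.mem_cons_self)

lemma isCycle_append_of_meet {x y : V} {p : G.Walk x y} {q : G.Walk y x}
    (hxy : x ≠ y) (hp : p.IsPath) (hq : q.IsPath)
    (hl : 3 ≤ p.length + q.length)
    (hmeet : ∀ t, t ∈ p.support → t ∈ q.support → t = x ∨ t = y) :
    (p.append q).IsCycle := by
  rw [isCycle_def]
  refine ⟨⟨?_⟩, ?_, ?_⟩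
  · rw [edges_append]
    refine List.Nodup.append hp.isTrail.edges_nodup hq.isTrail.edges_nodup ?_
    intro e hep heq
    induction e using Sym2.ind with
    | _ u1 u2 =>
      have h1 := hmeet u1 (fst_mem_support_of_mem_edges p hep)
        (fst_mem_support_of_mem_edges q heq)
      have h2 := hmeet u2 (snd_mem_support_of_mem_edges p hep)
        (snd_mem_support_of_mem_edges q heq)
      have hne : u1 ≠ u2 := (p.adj_of_mem_edges hep).ne
      have hexy : s(u1, u2) = s(x, y) := by
        rcases h1 with h1 | h1 <;> rcases h2 with h2 | h2 <;> subst h1 <;> subst h2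
        · exact absurd rfl hne
        · rfl
        · exact Sym2.eq_swap
        · exact absurd rfl hne
      rw [hexy] at hep heq
      have l1 := length_eq_one_of_edge_end hp hep
      have l2 : q.length = 1 := by
        refine length_eq_one_of_edge_end hq ?_
        rwa [Sym2.eq_swap] at heq
      omega
  · intro h
    have := congrArg Walk.length h
    rw [length_append] at this
    simp only [length_nil] at this
    omega
  · have hsup : (p.append q).support.tail = p.support.tail ++ q.support.tail := by
      rw [support_append]
      conv_lhs => rw [support_eq_cons p]
      rfl
    rw [hsup]
    refine List.Nodup.append (hp.support_nodup.sublist (List.tail_sublist _))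
      (hq.support_nodup.sublist (List.tail_sublist _)) ?_
    intro t htp htq
    rcases hmeet t (List.mem_of_mem_tail htp) (List.mem_of_mem_tail htq) with h | h
    · subst h
      have hnd := hp.support_nodup
      rw [support_eq_cons p] at hnd
      exact (List.nodup_cons.mp hnd).1 htp
    · subst h
      have hnd := hq.support_nodup
      rw [support_eq_cons q] at hnd
      exact (List.nodup_cons.mp hnd).1 htq

lemma exists_split_at_edge {v w : V} (p : G.Walk v w) {e : Sym2 V} (he : e ∈ p.edges) :
    ∃ (x y : V) (h : G.Adj x y) (p₁ : G.Walk v x) (p₂ : G.Walk y w),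
      p = p₁.append (Walk.cons h p₂) ∧ e = s(x, y) := by
  induction p with
  | nil => simp at he
  | @cons a b c hadj q ih =>
    rw [edges_cons, List.mem_cons] at he
    rcases he with he1 | he2
    · exact ⟨a, b, hadj, Walk.nil, q, by rw [nil_append], he1⟩
    · obtain ⟨x, y, h, p₁, p₂, hsplit, hee⟩ := ih he2
      exact ⟨x, y, h, Walk.cons hadj p₁, p₂, by rw [cons_append, hsplit], hee⟩

lemma cycle_split_at_edge {a b : V} {d : G.Walk a a} (hd : d.IsCycle)
    (he : s(a, b) ∈ d.edges) :
    ∃ (h : G.Adj a b) (r : G.Walk b a), (Walk.cons h r).IsCycle ∧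
      (Walk.cons h r).length = d.length ∧
      (∀ e, e ∈ (Walk.cons h r).edges ↔ e ∈ d.edges) ∧
      (∀ t, t ∈ (Walk.cons h r).support ↔ t ∈ d.support) := by
  obtain ⟨x, hx, r₀, rfl⟩ := cycle_exists_cons hd
  have hpe := (cons_isCycle_iff _ _).mp hd
  by_cases hbx : b = x
  · subst hbx
    exact ⟨hx, r₀, hd, rfl, fun _ => Iff.rfl, fun _ => Iff.rfl⟩
  · have he' : s(a, b) ∈ r₀.edges := by
      rw [edges_cons, List.mem_cons] at he
      rcases he with he1 | he2
      · rw [Sym2.eq_iff] at he1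
        rcases he1 with ⟨-, h2⟩ | ⟨h1, -⟩
        · exact absurd h2 hbx
        · exact absurd (h1 ▸ hx) G.irrefl
      · exact he2
    have hrrev : r₀.reverse.IsPath := hpe.1.reverse
    have herev : s(a, b) ∈ r₀.reverse.edges := by
      rw [edges_reverse, List.mem_reverse]; exact he'
    obtain ⟨hab, q, hq⟩ := cons_of_edge_start hrrev herev
    have hqp : q.IsPath ∧ a ∉ q.support := by
      rw [hq, cons_isPath_iff] at hrrev; exact hrrev
    have hsingle : (Walk.cons hx.symm (Walk.nil : G.Walk a a)).IsPath := by
      rw [cons_isPath_iff]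
      exact ⟨Walk.IsPath.nil, by simp [hx.ne']⟩
    have hrpath : (q.append (Walk.cons hx.symm Walk.nil)).IsPath := by
      refine isPath_append_of_meet hqp.1 hsingle ?_
      intro t htq hts
      simp only [support_cons, support_nil, List.mem_cons, List.mem_singleton] at hts
      rcases hts with h | h
      · exact h
      · simp at h; exact absurd (h ▸ htq) hqp.2
    have hlen : r₀.length = q.length + 1 := by
      have h1 := congrArg Walk.length hq
      rw [length_reverse] at h1
      simpa using h1
    have hmemr₀ : ∀ e : Sym2 V, e ∈ r₀.edges ↔ (e = s(a, b) ∨ e ∈ q.edges) := by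
      intro e
      rw [← List.mem_reverse, ← edges_reverse, hq, edges_cons, List.mem_cons]
    have hsupr₀ : ∀ t, t ∈ r₀.support ↔ (t = a ∨ t ∈ q.support) := by
      intro t
      rw [← List.mem_reverse, ← support_reverse, hq, support_cons, List.mem_cons]
    refine ⟨hab, q.append (Walk.cons hx.symm Walk.nil), ?_, ?_, ?_, ?_⟩
    · rw [cons_isCycle_iff]
      refine ⟨hrpath, ?_⟩
      rw [edges_append, List.mem_append]
      rintro (h | h)
      · exact hqp.2 (fst_mem_support_of_mem_edges q h)
      · simp only [edges_cons, edges_nil, List.mem_singleton] at h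
        rw [Sym2.eq_iff] at h
        rcases h with ⟨h1, -⟩ | ⟨-, h2⟩
        · exact absurd (h1 ▸ hx) G.irrefl
        · exact absurd h2 hbx
    · simp [length_append, hlen]
    · intro e
      have hsw : (s(x,a) : Sym2 V) = s(a,x) := Sym2.eq_swap
      simp only [edges_cons, edges_append, edges_nil, List.mem_cons, List.mem_append,
        List.mem_singleton, List.append_nil, List.not_mem_nil, or_false, hmemr₀ e, hsw]
      tauto
    · intro t
      simp only [support_cons, support_append, support_nil, List.mem_cons, List.mem_append,
        List.mem_singleton, List.tail_cons, List.not_mem_nil, or_false, hsupr₀ t]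
      tauto

lemma gstar_contra' {u w : V} {c : G.Walk u u} {Z : G.Walk w w}
    (hG : InGStar G) (hc : c.IsCycle) (hZ : Z.IsCycle) (hodd : Odd c.length)
    (hZodd : Odd Z.length) (hne : {e | e ∈ c.edges} ≠ {e | e ∈ Z.edges}) {f₁ f₂ : Sym2 V}
    (hf₁ : f₁ ∈ c.edges) (hf₁Z : f₁ ∈ Z.edges) (hf₂ : f₂ ∈ c.edges) (hf₂Z : f₂ ∈ Z.edges)
    (hff : f₁ ≠ f₂) : False := by
  have hcard := hG u w c Z hc hZ hodd hZodd hne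
  have hfin : ({e | e ∈ c.edges} ∩ {e | e ∈ Z.edges}).Finite :=
    (c.edges.finite_toSet).inter_of_left _
  have h2 : 1 < ({e | e ∈ c.edges} ∩ {e | e ∈ Z.edges}).ncard := by
    rw [Set.one_lt_ncard_iff hfin]
    exact ⟨f₁, f₂, ⟨hf₁, hf₁Z⟩, ⟨hf₂, hf₂Z⟩, hff⟩
  omega

lemma gstar_contra {u w : V} {c : G.Walk u u} {Z : G.Walk w w}
    (hG : InGStar G) (hc : c.IsCycle) (hZ : Z.IsCycle) (hodd : Odd c.length)
    (hZodd : Odd Z.length) {e₀ f₁ f₂ : Sym2 V}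
    (he₀Z : e₀ ∈ Z.edges) (he₀c : e₀ ∉ c.edges)
    (hf₁ : f₁ ∈ c.edges) (hf₁Z : f₁ ∈ Z.edges) (hf₂ : f₂ ∈ c.edges) (hf₂Z : f₂ ∈ Z.edges)
    (hff : f₁ ≠ f₂) : False := by
  refine gstar_contra' hG hc hZ hodd hZodd ?_ hf₁ hf₁Z hf₂ hf₂Z hff
  intro hset
  rw [Set.ext_iff] at hset
  exact he₀c ((hset e₀).mpr he₀Z)

lemma mem_tail_of_closed {x : V} {q : G.Walk x x} (h : q ≠ Walk.nil) :
    x ∈ q.support.tail := by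
  cases q with
  | nil => exact absurd rfl h
  | cons h r => simpa using end_mem_support r

lemma mem_support_iff_tail_of_closed {x t : V} {q : G.Walk x x} (h : q ≠ Walk.nil) :
    t ∈ q.support ↔ t ∈ q.support.tail := by
  constructor
  · intro ht
    rw [support_eq_cons q] at ht
    rcases List.mem_cons.mp ht with rfl | ht
    · exact mem_tail_of_closed h
    · exact ht
  · exact List.mem_of_mem_tail

lemma rotate_support_mem [DecidableEq V] {x u t : V} {c : G.Walk u u} (hc : c.IsCycle) (hx : x ∈ c.support) :
    t ∈ (c.rotate x hx).support ↔ t ∈ c.support := by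
  rw [mem_support_iff_tail_of_closed (hc.rotate hx).ne_nil,
    mem_support_iff_tail_of_closed hc.ne_nil]
  exact (support_rotate c x hx).mem_iff

lemma rotate_length [DecidableEq V] {x u : V} {c : G.Walk u u} (hx : x ∈ c.support) :
    (c.rotate x hx).length = c.length := by
  have h := (rotate_edges c x hx).perm.length_eq
  rwa [length_edges, length_edges] at h

/-- From a vertex of a path that meets `C` only at its end, one can walk back to the start
avoiding `C` entirely. -/
lemma reach_back [DecidableEq V] {C : List V} {v w x : V} {P : G.Walk v w} (hP : P.IsPath)
    (hPC : ∀ y ∈ P.support, y ∈ C → y = w) (hx : x ∈ P.support) (hxC : x ∉ C) :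
    ∃ S : G.Walk v x, ∀ y ∈ S.support, y ∉ C := by
  refine ⟨P.takeUntil x hx, fun y hy hyC => ?_⟩
  have hyP : y ∈ P.support := support_takeUntil_subset _ _ hy
  have hyw : y = w := hPC y hyP hyC
  subst hyw
  by_cases hxw : x = y
  · subst hxw; exact hxC hyC
  · exact end_not_mem_takeUntil hP hx hxw hy

lemma endreach_left [DecidableEq V] {C : List V} {a b x : V} {Q : G.Walk a b} (hQp : Q.IsPath)
    (hQC : ∀ y ∈ Q.support, y ∈ C → y = a ∨ y = b) (hbC : b ∈ C)
    (hx : x ∈ Q.support) (hxC : x ∉ C) :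
    ∃ R : G.Walk x a, ∀ y ∈ R.support, y ∈ C → y = a := by
  refine ⟨(Q.takeUntil x hx).reverse, fun y hy hyC => ?_⟩
  rw [support_reverse, List.mem_reverse] at hy
  rcases hQC y (support_takeUntil_subset _ _ hy) hyC with h | h
  · exact h
  · subst h
    exact absurd hy (end_not_mem_takeUntil hQp hx (fun h => hxC (h ▸ hbC)))

lemma endreach_right [DecidableEq V] {C : List V} {a b x : V} {Q : G.Walk a b} (hQp : Q.IsPath)
    (hQC : ∀ y ∈ Q.support, y ∈ C → y = a ∨ y = b) (haC : a ∈ C)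
    (hx : x ∈ Q.support) (hxC : x ∉ C) :
    ∃ R : G.Walk x b, ∀ y ∈ R.support, y ∈ C → y = b := by
  refine ⟨Q.dropUntil x hx, fun y hy hyC => ?_⟩
  rcases hQC y (support_dropUntil_subset _ _ hy) hyC with h | h
  · subst h
    exact absurd hy (start_not_mem_dropUntil hQp hx (fun h => hxC (h ▸ haC)))
  · exact h

lemma touches_trans [DecidableEq V] {u : V} {c : G.Walk u u} {v x w : V} (S : G.Walk v x)
    (hS : ∀ y ∈ S.support, y ∉ c.support) (R : G.Walk x w)
    (hR : ∀ y ∈ R.support, y ∈ c.support → y = w) (hw : w ∈ c.support) :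
    Touches G c v w := by
  refine ⟨hw, (S.append R).bypass, bypass_isPath _, fun y hy hyC => ?_⟩
  have hmem := support_bypass_subset _ hy
  rw [mem_support_append_iff] at hmem
  rcases hmem with h | h
  · exact absurd hyC (hS y h)
  · exact hR y h hyC

lemma touches_of_walk [DecidableEq V] {u : V} {c : G.Walk u u} {v z : V} (W : G.Walk v z)
    (hz : z ∈ c.support) :
    ∃ w, Touches G c v w ∧ w ∈ W.support := by
  induction W with
  | nil =>
    exact ⟨_, ⟨hz, Walk.nil, Walk.IsPath.nil, by simp⟩, start_mem_support _⟩
  | @cons p q r h W ih =>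
    by_cases hp : p ∈ c.support
    · exact ⟨p, ⟨hp, Walk.nil, Walk.IsPath.nil, by simp⟩, start_mem_support _⟩
    · obtain ⟨w, ⟨hw, pp, hpp, hppC⟩, hwW⟩ := ih hz
      refine ⟨w, ⟨hw, (Walk.cons h pp).bypass, bypass_isPath _, fun y hy hyC => ?_⟩,
        by rw [support_cons]; exact List.mem_cons_of_mem _ hwW⟩
      have hmem := support_bypass_subset _ hy
      rw [support_cons, List.mem_cons] at hmem
      rcases hmem with h1 | h1
      · exact absurd (h1 ▸ hyC) hp
      · exact hppC y h1 hyC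

lemma touches_exists [DecidableEq V] {u : V} {c : G.Walk u u} (hconn : G.Connected) (v : V) :
    ∃ w, Touches G c v w := by
  obtain ⟨W⟩ := hconn.preconnected v u
  obtain ⟨w, hw, -⟩ := touches_of_walk W (start_mem_support c)
  exact ⟨w, hw⟩

lemma touches_two {u : V} {c : G.Walk u u} (hc : c.IsCycle) (h2 : TwoConn G)
    {v a : V} (hv : v ∉ c.support) (ha : Touches G c v a) :
    ∃ b, Touches G c v b ∧ b ≠ a := by
  classical
  have hlen3 := hc.three_le_length
  have htail : c.support.tail.length = c.length := by
    have := length_support c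
    have ht : c.support.tail.length + 1 = c.support.length := by
      rw [support_eq_cons c]; rfl
    omega
  obtain ⟨z1, hz1, z2, hz2, hz12⟩ := twodist hc.support_nodup (by omega)
  obtain ⟨z, hz, hza⟩ : ∃ z ∈ c.support.tail, z ≠ a := by
    by_cases h1 : z1 = a
    · exact ⟨z2, hz2, fun h => hz12 (h1.trans h.symm)⟩
    · exact ⟨z1, hz1, h1⟩
  have hzs : z ∈ c.support := List.mem_of_mem_tail hz
  have hva : v ≠ a := fun h => hv (h ▸ ha.1)
  obtain ⟨W0⟩ := (h2.2 a).preconnected ⟨v, hva⟩ ⟨z, hza⟩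
  let W : G.Walk v z := W0.map (SimpleGraph.Embedding.induce {w | w ≠ a}).toHom
  have hWa : ∀ y ∈ W.support, y ≠ a := by
    intro y hy
    rw [show W.support = _ from Walk.support_map _ _, List.mem_map] at hy
    obtain ⟨t, -, rfl⟩ := hy
    exact t.2
  obtain ⟨w, hw, hwW⟩ := touches_of_walk W hzs
  exact ⟨w, hw, hWa w hwW⟩

/-- Key lemma: two distinct touched vertices joined by an outside path of length ≥ 2
must be adjacent along the cycle, and the outside path has even length. -/
lemma key3 [DecidableEq V] {u : V} (hG : InGStar G) {c : G.Walk u u} (hc : c.IsCycle)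
    (hodd : Odd c.length) {a b : V} (hab : a ≠ b)
    (hac : a ∈ c.support) (hbc : b ∈ c.support)
    {Q : G.Walk a b} (hQ : Q.IsPath) (hQ2 : 2 ≤ Q.length)
    (hQC : ∀ x ∈ Q.support, x ∈ c.support → x = a ∨ x = b) :
    s(a, b) ∈ c.edges ∧ Even Q.length := by
  have hd : (c.rotate a hac).IsCycle := hc.rotate hac
  have hde : ∀ e : Sym2 V, e ∈ (c.rotate a hac).edges ↔ e ∈ c.edges :=
    fun e => (rotate_edges c a hac).mem_iff
  have hds : ∀ t, t ∈ (c.rotate a hac).support ↔ t ∈ c.support :=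
    fun t => rotate_support_mem hc hac
  have hdl : (c.rotate a hac).length = c.length := rotate_length hac
  obtain ⟨x, hx, r₀, hcons⟩ := cycle_exists_cons hd
  have hr₀ : r₀.IsPath ∧ s(a, x) ∉ r₀.edges := by
    rw [hcons, cons_isCycle_iff] at hd; exact hd
  have hbr₀ : b ∈ r₀.support := by
    have hb' : b ∈ (c.rotate a hac).support := (hds b).mpr hbc
    rw [hcons, support_cons, List.mem_cons] at hb'
    exact hb'.resolve_left hab.symm
  -- the two arcs
  set tk := r₀.takeUntil b hbr₀ with htk_def
  set dr := r₀.dropUntil b hbr₀ with hdr_def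
  have htk : tk.IsPath := hr₀.1.takeUntil hbr₀
  have hdr : dr.IsPath := hr₀.1.dropUntil hbr₀
  have hna : a ∉ tk.support := end_not_mem_takeUntil hr₀.1 hbr₀ hab.symm
  have hA₁ : (Walk.cons hx tk).IsPath := (cons_isPath_iff _ _).mpr ⟨htk, hna⟩
  have hsplitlen : tk.length + dr.length = r₀.length := by
    have h := congrArg Walk.length (r₀.take_spec hbr₀)
    rwa [length_append] at h
  have hr0len : r₀.length + 1 = c.length := by
    have h := congrArg Walk.length hcons
    rw [length_cons] at h
    omega
  have hdrpos : 1 ≤ dr.length := length_pos_of_ne dr (Ne.symm hab)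
  -- edges of arcs are edges of c
  have hfirst : s(a, x) ∈ c.edges := by
    rw [← hde]
    rw [hcons, edges_cons]
    exact List.mem_cons_self
  have hr₀e : ∀ e ∈ r₀.edges, e ∈ c.edges := by
    intro e he
    rw [← hde, hcons, edges_cons]
    exact List.mem_cons_of_mem _ he
  have hA₁e : ∀ e ∈ (Walk.cons hx tk).edges, e ∈ c.edges := by
    intro e he
    rw [edges_cons, List.mem_cons] at he
    rcases he with rfl | he
    · exact hfirst
    · exact hr₀e e (edges_takeUntil_subset r₀ hbr₀ he)
  have hdre : ∀ e ∈ dr.edges, e ∈ c.edges :=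
    fun e he => hr₀e e (edges_dropUntil_subset r₀ hbr₀ he)
  -- supports of arcs are in c
  have hr₀s : ∀ t ∈ r₀.support, t ∈ c.support := by
    intro t ht
    rw [← hds, hcons, support_cons]
    exact List.mem_cons_of_mem _ ht
  have hA₁s : ∀ t ∈ (Walk.cons hx tk).support, t ∈ c.support := by
    intro t ht
    rw [support_cons, List.mem_cons] at ht
    rcases ht with rfl | ht
    · exact hac
    · exact hr₀s t (support_takeUntil_subset r₀ hbr₀ ht)
  have hdrs : ∀ t ∈ dr.support, t ∈ c.support :=
    fun t ht => hr₀s t (support_dropUntil_subset r₀ hbr₀ ht)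
  -- the two glued cycles
  have hZ : (Q.append dr).IsCycle := by
    refine isCycle_append_of_meet hab hQ hdr (by omega) ?_
    intro t htQ htdr
    exact hQC t htQ (hdrs t htdr)
  have hZ' : ((Walk.cons hx tk).append Q.reverse).IsCycle := by
    refine isCycle_append_of_meet hab hA₁ hQ.reverse (by rw [length_reverse, length_cons]; omega) ?_
    intro t htA htQr
    rw [support_reverse, List.mem_reverse] at htQr
    rcases hQC t htQr (hA₁s t htA) with h | h
    · exact Or.inl h
    · exact Or.inr h
  -- a bad edge of Q
  have hbadedge : ∃ e₀ ∈ Q.edges, e₀ ∉ c.edges := by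
    cases Q with
    | nil => simp at hQ2
    | @cons _ z1 _ hq1 Q1 =>
      refine ⟨s(a, z1), by rw [edges_cons]; exact List.mem_cons_self, ?_⟩
      intro hmem
      have hz1 : z1 ∈ c.support := snd_mem_support_of_mem_edges c hmem
      have hz1Q : z1 ∈ (Walk.cons hq1 Q1).support := by
        rw [support_cons]
        exact List.mem_cons_of_mem _ (start_mem_support Q1)
      rcases hQC z1 hz1Q hz1 with rfl | rfl
      · exact G.irrefl hq1
      · have := length_eq_one_of_edge_end hQ (by rw [edges_cons]; exact List.mem_cons_self)
        omega
  obtain ⟨e₀, he₀Q, he₀c⟩ := hbadedge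
  -- parity case analysis
  rcases Nat.even_or_odd (Q.length + dr.length) with hZe | hZo
  · -- Z even, so Z' odd
    have hZ'odd : Odd ((Walk.cons hx tk).length + Q.reverse.length) := by
      obtain ⟨k, hk⟩ := hodd
      obtain ⟨m, hm⟩ := hZe
      rw [length_reverse, length_cons]
      exact ⟨k + Q.length - m, by omega⟩
    by_cases h2 : 2 ≤ (Walk.cons hx tk).length
    · exfalso
      obtain ⟨f₁, hf₁, f₂, hf₂, hff⟩ := twodist hA₁.isTrail.edges_nodup
        (by rw [length_edges]; exact h2)
      refine gstar_contra hG hc hZ' hodd (by rw [length_append]; exact hZ'odd)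
        (e₀ := e₀) (f₁ := f₁) (f₂ := f₂) ?_ he₀c (hA₁e f₁ hf₁) ?_ (hA₁e f₂ hf₂) ?_ hff
      · rw [edges_append, List.mem_append]
        exact Or.inr (by rw [edges_reverse, List.mem_reverse]; exact he₀Q)
      · rw [edges_append, List.mem_append]; exact Or.inl hf₁
      · rw [edges_append, List.mem_append]; exact Or.inl hf₂
    · have htk0 : tk.length = 0 := by
        rw [length_cons] at h2; omega
      have hxb : x = b := eq_of_length_zero tk htk0
      subst hxb
      constructor
      · exact hfirst
      · rw [length_reverse, length_cons, htk0] at hZ'odd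
        obtain ⟨j, hj⟩ := hZ'odd
        exact ⟨j, by omega⟩
  · -- Z odd
    by_cases h2 : 2 ≤ dr.length
    · exfalso
      obtain ⟨f₁, hf₁, f₂, hf₂, hff⟩ := twodist hdr.isTrail.edges_nodup
        (by rw [length_edges]; exact h2)
      refine gstar_contra hG hc hZ hodd (by rw [length_append]; exact hZo) (e₀ := e₀)
        (f₁ := f₁) (f₂ := f₂) ?_ he₀c (hdre f₁ hf₁) ?_ (hdre f₂ hf₂) ?_ hff
      · rw [edges_append, List.mem_append]; exact Or.inl he₀Q
      · rw [edges_append, List.mem_append]; exact Or.inr hf₁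
      · rw [edges_append, List.mem_append]; exact Or.inr hf₂
    · have hdr1 : dr.length = 1 := by omega
      constructor
      · have := edge_mem_of_length_one dr hdr1
        have h := hdre _ this
        rwa [Sym2.eq_swap] at h
      · rw [hdr1] at hZo
        obtain ⟨j, hj⟩ := hZo
        exact ⟨j, by omega⟩

lemma surgery_core {u a₁ b₁ x' y' : V} {c : G.Walk u u} (hc : c.IsCycle)
    (hodd : Odd c.length)
    (hlongest : ∀ (w : V) (c' : G.Walk w w), c'.IsCycle → Odd c'.length →
      c'.length ≤ c.length)
    (h1 : a₁ ≠ b₁)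
    {r₁ : G.Walk b₁ x'} {r₂ : G.Walk y' a₁} (hr₁ : r₁.IsPath) (hr₂ : r₂.IsPath)
    (dj : ∀ t ∈ r₁.support, t ∉ r₂.support)
    (hr₁s : ∀ t ∈ r₁.support, t ∈ c.support) (hr₂s : ∀ t ∈ r₂.support, t ∈ c.support)
    {Q₁ : G.Walk a₁ b₁} (hQ₁ : Q₁.IsPath) (hQ₁2 : 2 ≤ Q₁.length) (hQ₁ev : Even Q₁.length)
    (hQ₁C : ∀ t ∈ Q₁.support, t ∈ c.support → t = a₁ ∨ t = b₁)
    {Q₂ : G.Walk x' y'} (hQ₂ : Q₂.IsPath) (hQ₂2 : 2 ≤ Q₂.length) (hQ₂ev : Even Q₂.length)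
    (hQ₂C : ∀ t ∈ Q₂.support, t ∈ c.support → t = x' ∨ t = y')
    (hdisj : ∀ t ∈ Q₁.support, t ∈ Q₂.support → t ∈ c.support)
    (hlen : r₁.length + 1 + r₂.length + 1 = c.length) : False := by
  have hx'r₁ : x' ∈ r₁.support := end_mem_support r₁
  have hy'r₂ : y' ∈ r₂.support := start_mem_support r₂
  have hinner : (Q₂.append r₂).IsPath := by
    refine isPath_append_of_meet hQ₂ hr₂ ?_
    intro t htQ htr
    rcases hQ₂C t htQ (hr₂s t htr) with rfl | rfl
    · exact absurd htr (dj _ hx'r₁)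
    · rfl
  have hW : (r₁.append (Q₂.append r₂)).IsPath := by
    refine isPath_append_of_meet hr₁ hinner ?_
    intro t htr htin
    rw [mem_support_append_iff] at htin
    rcases htin with htQ | htr₂
    · rcases hQ₂C t htQ (hr₁s t htr) with rfl | rfl
      · rfl
      · exact absurd htr (fun h => dj _ h hy'r₂)
    · exact absurd htr₂ (dj _ htr)
  have hZ : (Q₁.append (r₁.append (Q₂.append r₂))).IsCycle := by
    refine isCycle_append_of_meet h1 hQ₁ hW (by rw [length_append, length_append]; omega) ?_
    intro t htQ₁ htW
    rw [mem_support_append_iff, mem_support_append_iff] at htW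
    rcases htW with htr | htQ | htr
    · exact hQ₁C t htQ₁ (hr₁s t htr)
    · exact hQ₁C t htQ₁ (hdisj t htQ₁ htQ)
    · exact hQ₁C t htQ₁ (hr₂s t htr)
  have hZlen : (Q₁.append (r₁.append (Q₂.append r₂))).length =
      Q₁.length + (r₁.length + (Q₂.length + r₂.length)) := by
    rw [length_append, length_append, length_append]
  have hZodd : Odd (Q₁.append (r₁.append (Q₂.append r₂))).length := by
    obtain ⟨k, hk⟩ := hodd
    obtain ⟨m₁, hm₁⟩ := hQ₁ev
    obtain ⟨m₂, hm₂⟩ := hQ₂ev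
    rw [hZlen]
    exact ⟨m₁ + m₂ + k - 1, by omega⟩
  have := hlongest a₁ _ hZ hZodd
  rw [hZlen] at this
  omega

lemma surgery [DecidableEq V] {u : V} {c : G.Walk u u} (hc : c.IsCycle)
    (hodd : Odd c.length)
    (hlongest : ∀ (w : V) (c' : G.Walk w w), c'.IsCycle → Odd c'.length →
      c'.length ≤ c.length)
    {a₁ b₁ x y : V} (h1 : a₁ ≠ b₁) (ha₁ : a₁ ∈ c.support)
    (he₁ : s(a₁, b₁) ∈ c.edges) (he₂ : s(x, y) ∈ c.edges) (hnee : s(a₁, b₁) ≠ s(x, y))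
    {Q₁ : G.Walk a₁ b₁} (hQ₁ : Q₁.IsPath) (hQ₁2 : 2 ≤ Q₁.length) (hQ₁ev : Even Q₁.length)
    (hQ₁C : ∀ t ∈ Q₁.support, t ∈ c.support → t = a₁ ∨ t = b₁)
    {Q₂ : G.Walk x y} (hQ₂ : Q₂.IsPath) (hQ₂2 : 2 ≤ Q₂.length) (hQ₂ev : Even Q₂.length)
    (hQ₂C : ∀ t ∈ Q₂.support, t ∈ c.support → t = x ∨ t = y)
    (hdisj : ∀ t ∈ Q₁.support, t ∈ Q₂.support → t ∈ c.support) : False := by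
  have hd : (c.rotate a₁ ha₁).IsCycle := hc.rotate ha₁
  have hde : ∀ e : Sym2 V, e ∈ (c.rotate a₁ ha₁).edges ↔ e ∈ c.edges :=
    fun e => (rotate_edges c a₁ ha₁).mem_iff
  have hds : ∀ t, t ∈ (c.rotate a₁ ha₁).support ↔ t ∈ c.support :=
    fun t => rotate_support_mem hc ha₁
  have hdl : (c.rotate a₁ ha₁).length = c.length := rotate_length ha₁
  obtain ⟨hadj, r, hcyc, hrl, hredges, hrsupp⟩ :=
    cycle_split_at_edge hd ((hde _).mpr he₁)
  have hrpath : r.IsPath := ((cons_isCycle_iff _ _).mp hcyc).1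
  have he₂r : s(x, y) ∈ r.edges := by
    have h := (hredges s(x, y)).mpr ((hde _).mpr he₂)
    rw [edges_cons, List.mem_cons] at h
    exact h.resolve_left (fun h' => hnee h'.symm)
  obtain ⟨x', y', hxy', r₁, r₂, hsplit, hee⟩ := exists_split_at_edge r he₂r
  have hsups : r.support = r₁.support ++ r₂.support := by
    rw [hsplit, support_append, support_cons, List.tail_cons]
  have hnd : (r₁.support ++ r₂.support).Nodup := by
    rw [← hsups]; exact hrpath.support_nodup
  have hr₁p : r₁.IsPath := Walk.IsPath.mk' (List.Nodup.of_append_left hnd)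
  have hr₂p : r₂.IsPath := Walk.IsPath.mk' (List.Nodup.of_append_right hnd)
  have dj : ∀ t ∈ r₁.support, t ∉ r₂.support :=
    fun t ht ht' => (List.disjoint_of_nodup_append hnd) ht ht'
  have hrs : ∀ t ∈ r.support, t ∈ c.support := by
    intro t ht
    refine (hds t).mp ((hrsupp t).mp ?_)
    rw [support_cons]
    exact List.mem_cons_of_mem _ ht
  have hr₁s : ∀ t ∈ r₁.support, t ∈ c.support :=
    fun t ht => hrs t (by rw [hsups]; exact List.mem_append_left _ ht)
  have hr₂s : ∀ t ∈ r₂.support, t ∈ c.support :=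
    fun t ht => hrs t (by rw [hsups]; exact List.mem_append_right _ ht)
  have hlensum : r₁.length + 1 + r₂.length + 1 = c.length := by
    have h := congrArg Walk.length hsplit
    rw [length_append, length_cons] at h
    have h2 := hrl
    rw [length_cons, hdl] at h2
    omega
  rcases Sym2.eq_iff.mp hee with ⟨hx1, hy1⟩ | ⟨hx1, hy1⟩
  · subst hx1; subst hy1
    exact surgery_core hc hodd hlongest h1 hr₁p hr₂p dj hr₁s hr₂s
      hQ₁ hQ₁2 hQ₁ev hQ₁C hQ₂ hQ₂2 hQ₂ev hQ₂C hdisj hlensum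
  · subst hx1; subst hy1
    refine surgery_core hc hodd hlongest h1 hr₁p hr₂p dj hr₁s hr₂s
      hQ₁ hQ₁2 hQ₁ev hQ₁C (Q₂ := Q₂.reverse) hQ₂.reverse
      (by rw [length_reverse]; exact hQ₂2) (by rw [length_reverse]; exact hQ₂ev) ?_ ?_ hlensum
    · intro t ht htc
      rw [support_reverse, List.mem_reverse] at ht
      exact (hQ₂C t ht htc).symm
    · intro t ht htq
      rw [support_reverse, List.mem_reverse] at htq
      exact hdisj t ht htq

/-- From two touched vertices, build an outside connecting path. -/
lemma touch2Q [DecidableEq V] {u : V} {c : G.Walk u u} {v a b : V}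
    (hv : v ∉ c.support) (hab : a ≠ b)
    (ha : Touches G c v a) (hb : Touches G c v b) :
    ∃ Q : G.Walk a b, Q.IsPath ∧ 2 ≤ Q.length ∧
      (∀ x ∈ Q.support, x ∈ c.support → x = a ∨ x = b) ∧
      (∀ x ∈ Q.support, x ∉ c.support →
        ∃ S : G.Walk v x, ∀ y ∈ S.support, y ∉ c.support) := by
  obtain ⟨haC, Pa, hPa, hPaC⟩ := ha
  obtain ⟨hbC, Pb, hPb, hPbC⟩ := hb
  have hWsup : ∀ t, t ∈ (Pa.reverse.append Pb).support →
      t ∈ Pa.support ∨ t ∈ Pb.support := by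
    intro t ht
    rw [mem_support_append_iff] at ht
    rcases ht with ht | ht
    · rw [support_reverse, List.mem_reverse] at ht
      exact Or.inl ht
    · exact Or.inr ht
  refine ⟨(Pa.reverse.append Pb).bypass, bypass_isPath _, ?_, ?_, ?_⟩
  · have hpos : 0 < (Pa.reverse.append Pb).bypass.length :=
      length_pos_of_ne _ hab
    rcases Nat.lt_or_ge (Pa.reverse.append Pb).bypass.length 2 with hlt | hge
    · exfalso
      have h1 : (Pa.reverse.append Pb).bypass.length = 1 := by omega
      have hmem : s(a, b) ∈ (Pa.reverse.append Pb).edges :=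
        edges_bypass_subset _ (edge_mem_of_length_one _ h1)
      rw [edges_append, List.mem_append] at hmem
      rcases hmem with hm | hm
      · rw [edges_reverse, List.mem_reverse] at hm
        exact hab (hPaC b (snd_mem_support_of_mem_edges Pa hm) hbC).symm
      · exact hab (hPbC a (fst_mem_support_of_mem_edges Pb hm) haC)
    · exact hge
  · intro t ht htc
    rcases hWsup t (support_bypass_subset _ ht) with h | h
    · exact Or.inl (hPaC t h htc)
    · exact Or.inr (hPbC t h htc)
  · intro t ht htc
    rcases hWsup t (support_bypass_subset _ ht) with h | h
    · exact reach_back hPa hPaC h htc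
    · exact reach_back hPb hPbC h htc

/-- The characterization of the touching set: exactly two vertices, adjacent on `c`. -/
lemma char_touch [DecidableEq V] {u : V} (hG : InGStar G) {c : G.Walk u u} (hc : c.IsCycle)
    (hodd : Odd c.length) (hlen : 5 ≤ c.length) (h2 : TwoConn G)
    {v : V} (hv : v ∉ c.support) :
    ∃ a b : V, a ≠ b ∧ Touches G c v a ∧ Touches G c v b ∧ s(a, b) ∈ c.edges ∧
      (∀ w, Touches G c v w → w = a ∨ w = b) := by
  obtain ⟨a, ha⟩ := touches_exists h2.1 v
  obtain ⟨b, hb, hba⟩ := touches_two hc h2 hv ha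
  have hedge : s(a, b) ∈ c.edges := by
    obtain ⟨Q, hQ, hQ2, hQC, -⟩ := touch2Q hv (Ne.symm hba) ha hb
    exact (key3 hG hc hodd (Ne.symm hba) ha.1 hb.1 hQ hQ2 hQC).1
  refine ⟨a, b, Ne.symm hba, ha, hb, hedge, ?_⟩
  intro w hw
  by_contra hcon
  push_neg at hcon
  obtain ⟨hwa, hwb⟩ := hcon
  have hewa : s(w, a) ∈ c.edges := by
    obtain ⟨Q, hQ, hQ2, hQC, -⟩ := touch2Q hv hwa hw ha
    exact (key3 hG hc hodd hwa hw.1 ha.1 hQ hQ2 hQC).1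
  have hewb : s(w, b) ∈ c.edges := by
    obtain ⟨Q, hQ, hQ2, hQC, -⟩ := touch2Q hv hwb hw hb
    exact (key3 hG hc hodd hwb hw.1 hb.1 hQ hQ2 hQC).1
  -- build the triangle a - b - w - a
  have hab' : G.Adj a b := c.adj_of_mem_edges hedge
  have hbw : G.Adj b w := (c.adj_of_mem_edges hewb).symm
  have hwa' : G.Adj w a := c.adj_of_mem_edges hewa
  set t : G.Walk a a := Walk.cons hab' (Walk.cons hbw (Walk.cons hwa' Walk.nil)) with ht_def
  have hrest : (Walk.cons hbw (Walk.cons hwa' Walk.nil)).IsPath := by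
    rw [cons_isPath_iff, cons_isPath_iff]
    refine ⟨⟨Walk.IsPath.nil, ?_⟩, ?_⟩
    · simp only [support_nil, List.mem_singleton]
      exact hwa'.ne
    · simp only [support_cons, support_nil, List.mem_cons, List.mem_singleton]
      push_neg
      exact ⟨hbw.ne, Ne.symm hab'.ne, by simp⟩
  have htc : t.IsCycle := by
    rw [ht_def, cons_isCycle_iff]
    refine ⟨hrest, ?_⟩
    simp only [edges_cons, edges_nil, List.mem_cons, List.mem_singleton]
    push_neg
    refine ⟨?_, ?_, by simp⟩
    · intro h
      rw [Sym2.eq_iff] at h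
      rcases h with ⟨h1, -⟩ | ⟨h1, -⟩
      · exact hab'.ne h1
      · exact hwa'.ne h1.symm
    · intro h
      rw [Sym2.eq_iff] at h
      rcases h with ⟨h1, -⟩ | ⟨-, h2⟩
      · exact hwa'.ne h1.symm
      · exact hbw.ne h2
  have htlen : t.length = 3 := by simp [ht_def]
  have htedges : t.edges = [s(a, b), s(b, w), s(w, a)] := by simp [ht_def]
  -- c has an edge not among the three triangle edges
  have hcne : ∃ e ∈ c.edges, e ∉ t.edges := by
    by_contra hsub
    push_neg at hsub
    have hnodup : c.edges.Nodup := hc.isTrail.edges_nodup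
    have hcard : c.edges.toFinset.card = c.edges.length := List.toFinset_card_of_nodup hnodup
    have hsub' : c.edges.toFinset ⊆ t.edges.toFinset := by
      intro e he
      rw [List.mem_toFinset] at he ⊢
      exact hsub e he
    have h3 : t.edges.toFinset.card ≤ 3 := by
      rw [htedges]
      exact (List.toFinset_card_le _).trans (by simp)
    have hge := Finset.card_le_card hsub'
    rw [length_edges] at hcard
    omega
  obtain ⟨e, hec, het⟩ := hcne
  have hne : {e | e ∈ c.edges} ≠ {e | e ∈ t.edges} := by
    intro hset
    rw [Set.ext_iff] at hset
    exact het ((hset e).mp hec)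
  refine gstar_contra' hG hc htc hodd (by rw [htlen]; exact ⟨1, rfl⟩) hne
    (f₁ := s(a, b)) (f₂ := s(b, w)) hedge (by rw [htedges]; simp)
    (by rw [Sym2.eq_swap]; exact hewb) (by rw [htedges]; simp) ?_
  intro h
  rw [Sym2.eq_iff] at h
  rcases h with ⟨h1, -⟩ | ⟨h1, -⟩
  · exact hab'.ne h1
  · exact hwa h1.symm

end Stmt9Aux

open Stmt9Aux in
/-- for a longest odd cycle `c` (length ≥ 5) of a 2-connected
`G ∈ G*`, the touching set `T(v)` is the same for all `v` outside `c`. -/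
theorem stmt9 {V : Type*} (G : SimpleGraph V) (hG : InGStar G) (h2 : TwoConn G)
    (u : V) (c : G.Walk u u) (hc : c.IsCycle) (hodd : Odd c.length)
    (hlongest : ∀ (w : V) (c' : G.Walk w w), c'.IsCycle → Odd c'.length →
      c'.length ≤ c.length)
    (hlen : 5 ≤ c.length) :
    ∀ v₁ v₂ : V, v₁ ∉ c.support → v₂ ∉ c.support →
      ∀ w : V, Touches G c v₁ w ↔ Touches G c v₂ w := by
  classical
  intro v₁ v₂ hv₁ hv₂ w
  obtain ⟨a₁, b₁, hne₁, ha₁, hb₁, he₁, uniq₁⟩ := char_touch hG hc hodd hlen h2 hv₁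
  obtain ⟨a₂, b₂, hne₂, ha₂, hb₂, he₂, uniq₂⟩ := char_touch hG hc hodd hlen h2 hv₂
  have hkey : s(a₁, b₁) = s(a₂, b₂) := by
    by_contra hnee
    obtain ⟨Q₁, hQ₁, hQ₁2, hQ₁C, hQ₁R⟩ := touch2Q hv₁ hne₁ ha₁ hb₁
    obtain ⟨Q₂, hQ₂, hQ₂2, hQ₂C, hQ₂R⟩ := touch2Q hv₂ hne₂ ha₂ hb₂
    have hQ₁ev : Even Q₁.length :=
      (key3 hG hc hodd hne₁ ha₁.1 hb₁.1 hQ₁ hQ₁2 hQ₁C).2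
    have hQ₂ev : Even Q₂.length :=
      (key3 hG hc hodd hne₂ ha₂.1 hb₂.1 hQ₂ hQ₂2 hQ₂C).2
    have hdisj : ∀ t ∈ Q₁.support, t ∈ Q₂.support → t ∈ c.support := by
      intro t ht1 ht2
      by_contra htC
      obtain ⟨S, hS⟩ := hQ₁R t ht1 htC
      obtain ⟨Ra, hRa⟩ := endreach_left hQ₂ hQ₂C hb₂.1 ht2 htC
      obtain ⟨Rb, hRb⟩ := endreach_right hQ₂ hQ₂C ha₂.1 ht2 htC
      have t2a := touches_trans S hS Ra hRa ha₂.1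
      have t2b := touches_trans S hS Rb hRb hb₂.1
      have hha := uniq₁ a₂ t2a
      have hhb := uniq₁ b₂ t2b
      apply hnee
      rcases hha with rfl | rfl <;> rcases hhb with rfl | rfl
      · exact absurd rfl hne₂
      · rfl
      · exact Sym2.eq_swap
      · exact absurd rfl hne₂
    exact surgery hc hodd hlongest hne₁ ha₁.1 he₁ he₂ hnee
      hQ₁ hQ₁2 hQ₁ev hQ₁C hQ₂ hQ₂2 hQ₂ev hQ₂C hdisj
  rw [Sym2.eq_iff] at hkey
  constructor
  · intro hw
    rcases uniq₁ w hw with rfl | rfl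
    · rcases hkey with ⟨rfl, -⟩ | ⟨rfl, -⟩
      · exact ha₂
      · exact hb₂
    · rcases hkey with ⟨-, rfl⟩ | ⟨-, rfl⟩
      · exact hb₂
      · exact ha₂
  · intro hw
    rcases uniq₂ w hw with rfl | rfl
    · rcases hkey with ⟨h, -⟩ | ⟨-, h⟩
      · exact h ▸ ha₁
      · exact h ▸ hb₁
    · rcases hkey with ⟨-, h⟩ | ⟨h, -⟩
      · exact h ▸ hb₁
      · exact h ▸ ha₁
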